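/- Suppose π₁ ≥ (1/e)·A + (1/√e)·B and π₂ ≥ (1/√e)·A + (1/2)·B for non-negative reals A, B with A + B ≥ π*. Then max(π₁, π₂) ≥ π*/(4√e − 2 − e). -/

import Mathlib

/-- Algebraic balancing step for the 1.877-approximation: if
π₁ ≥ A/e + B/√e and π₂ ≥ A/√e + B/2 with A + B ≥ π*, then
max(π₁, π₂) ≥ π*/(4√e − 2 − e). -/
theorem approx_balancing (A B πstar π₁ π₂ : ℝ)
    (hA : 0 ≤ A) (hB : 0 ≤ B) (hAB : A + B ≥ πstar)
    (h₁ : π₁ ≥ (1/Real.exp 1) * A + (1/Real.sqrt (Real.exp 1)) * B)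
    (h₂ : π₂ ≥ (1/Real.sqrt (Real.exp 1)) * A + (1/2) * B) :
    max π₁ π₂ ≥ πstar / (4 * Real.sqrt (Real.exp 1) - 2 - Real.exp 1) := by
  set s := Real.sqrt (Real.exp 1) with hs
  have he : (0:ℝ) < Real.exp 1 := Real.exp_pos 1
  have he1 : (1:ℝ) < Real.exp 1 := by
    have := Real.exp_one_gt_d9; linarith
  have he4 : Real.exp 1 < 4 := by
    have := Real.exp_one_lt_d9; linarith
  have hs0 : 0 ≤ s := Real.sqrt_nonneg _
  have hs2 : s * s = Real.exp 1 := Real.mul_self_sqrt he.le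
  rw [← hs2] at h₁ he1 he4 ⊢
  have hs1 : 1 < s := by nlinarith
  have hslt2 : s < 2 := by nlinarith
  have hspos : (0:ℝ) < s := by linarith
  have hD : 0 < 4 * s - 2 - s * s := by nlinarith
  have h₁' : A + s * B ≤ s * s * π₁ := by
    have key : s * s * ((1/(s*s)) * A + (1/s) * B) = A + s * B := by
      field_simp
    nlinarith [mul_le_mul_of_nonneg_left h₁ (mul_nonneg hs0 hs0)]
  have h₂' : A + s * B / 2 ≤ s * π₂ := by
    have key : s * ((1/s) * A + (1/2) * B) = A + s * B / 2 := by
      field_simp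
    nlinarith [mul_le_mul_of_nonneg_left h₂ hs0]
  have hM1 : π₁ ≤ max π₁ π₂ := le_max_left _ _
  have hM2 : π₂ ≤ max π₁ π₂ := le_max_right _ _
  rw [ge_iff_le, div_le_iff₀ hD]
  have k1 : (2 - s) * (A + s * B) ≤ (2 - s) * (s * s * π₁) :=
    mul_le_mul_of_nonneg_left h₁' (by linarith)
  have k2 : (2 * (s - 1)) * (A + s * B / 2) ≤ (2 * (s - 1)) * (s * π₂) :=
    mul_le_mul_of_nonneg_left h₂' (by linarith)
  have m1 : (s * s * (2 - s)) * π₁ ≤ (s * s * (2 - s)) * max π₁ π₂ :=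
    mul_le_mul_of_nonneg_left hM1 (by nlinarith)
  have m2 : (2 * s * (s - 1)) * π₂ ≤ (2 * s * (s - 1)) * max π₁ π₂ :=
    mul_le_mul_of_nonneg_left hM2 (by nlinarith)
  have id1 : (s * s * (2 - s)) * max π₁ π₂ + (2 * s * (s - 1)) * max π₁ π₂
      = s * (max π₁ π₂ * (4 * s - 2 - s * s)) := by ring
  have key : s * πstar ≤ s * (max π₁ π₂ * (4 * s - 2 - s * s)) := by
    nlinarith [k1, k2, m1, m2, id1]
  exact le_of_mul_le_mul_left key hspos
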